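/- Fix λ_1,…,λ_{m−1} ∈ ℂ and R_1,…,R_{m−1} > 0 such that S = {z ∈ ℂ : |z| ≤ 1 and |z − λ_j| ≥ R_j for j = 1,…,m−1} is nonempty. For every finitely supported family of complex coefficients p = (p_{kl}) and every ε > 0 there exists C(p,ε) ≥ 0 such that: for every unital C*-algebra A, every δ ≥ 0, and every a ∈ A with ‖a‖ ≤ 1, ‖a a* − a* a‖ ≤ δ, and each a − λ_j·1 invertible with ‖(a − λ_j·1)^{−1}‖ ≤ R_j^{−1}, both ‖p(a,a*)·p(a,a*)* − 1‖ and ‖p(a,a*)*·p(a,a*) − 1‖ are at most max_{z∈S} | |p(z,z̄)|² − 1 | + ε + C(p,ε)·δ. -/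

import Mathlib

open scoped ComplexConjugate

/-- Evaluation of a finitely supported coefficient family `p = (p_{kl})` at an element `a`
of a star `ℂ`-algebra: `p(a,a*) = ∑ p_{kl} a^k (a*)^l`. -/
noncomputable def polyEvalA {A : Type*} [Ring A] [StarRing A] [Algebra ℂ A]
    (p : (ℕ × ℕ) →₀ ℂ) (a : A) : A :=
  p.sum fun kl c => c • (a ^ kl.1 * star a ^ kl.2)

/-- The function `z ↦ p(z, z̄) = ∑ p_{kl} z^k conj(z)^l`. -/
noncomputable def polyEvalC (p : (ℕ × ℕ) →₀ ℂ) (z : ℂ) : ℂ :=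
  p.sum fun kl c => c * z ^ kl.1 * (conj z) ^ kl.2

open Filter Topology
open scoped ENNReal Classical

noncomputable section

namespace UltraProd

universe u
variable {A : ℕ → Type u} [∀ n, CStarAlgebra (A n)] [∀ n, Nontrivial (A n)]
variable (U : Ultrafilter ℕ)

/-- ultralimit of coordinate norms -/
def phi (x : lp A ∞) : ℝ := Filter.limsup (fun n => ‖x n‖) U

lemma tendsto_phi (x : lp A ∞) : Tendsto (fun n => ‖x n‖) U (𝓝 (phi U x)) := by
  have hmem : ∀ n, ‖x n‖ ∈ Set.Icc (0:ℝ) ‖x‖ := fun n =>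
    ⟨norm_nonneg _, lp.norm_apply_le_norm ENNReal.top_ne_zero x n⟩
  have hK : IsCompact (Set.Icc (0:ℝ) ‖x‖) := isCompact_Icc
  have hle : (U.map fun n => ‖x n‖ : Filter ℝ) ≤ 𝓟 (Set.Icc (0:ℝ) ‖x‖) := by
    have hev : ∀ᶠ n in (U : Filter ℕ), ‖x n‖ ∈ Set.Icc (0:ℝ) ‖x‖ := .of_forall hmem
    exact Filter.le_principal_iff.2 (Filter.mem_map.2 hev)
  obtain ⟨l, -, hl⟩ := hK.ultrafilter_le_nhds (U.map fun n => ‖x n‖) hle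
  have ht : Tendsto (fun n => ‖x n‖) U (𝓝 l) := hl
  rwa [show phi U x = l from ht.limsup_eq]

lemma phi_eq_of_tendsto {x : lp A ∞} {l : ℝ} (h : Tendsto (fun n => ‖x n‖) U (𝓝 l)) :
    phi U x = l := tendsto_nhds_unique (tendsto_phi U x) h

lemma phi_nonneg (x : lp A ∞) : 0 ≤ phi U x :=
  le_of_tendsto_of_tendsto' tendsto_const_nhds (tendsto_phi U x) fun _ => norm_nonneg _

lemma phi_le_norm (x : lp A ∞) : phi U x ≤ ‖x‖ :=
  le_of_tendsto_of_tendsto' (tendsto_phi U x) tendsto_const_nhds fun n =>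
    lp.norm_apply_le_norm ENNReal.top_ne_zero x n

lemma phi_zero : phi U (0 : lp A ∞) = 0 :=
  phi_eq_of_tendsto U (by simpa [lp.coeFn_zero] using (tendsto_const_nhds : Tendsto (fun _ : ℕ => (0:ℝ)) U _))

lemma phi_neg (x : lp A ∞) : phi U (-x) = phi U x :=
  phi_eq_of_tendsto U (by simpa [lp.coeFn_neg] using tendsto_phi U x)

lemma phi_add_le (x y : lp A ∞) : phi U (x + y) ≤ phi U x + phi U y := by
  refine le_of_tendsto_of_tendsto' (tendsto_phi U _) ((tendsto_phi U x).add (tendsto_phi U y))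
    fun n => ?_
  simpa [lp.coeFn_add] using norm_add_le (x n) (y n)

lemma phi_mul_le (x y : lp A ∞) : phi U (x * y) ≤ phi U x * phi U y := by
  refine le_of_tendsto_of_tendsto' (tendsto_phi U _) ((tendsto_phi U x).mul (tendsto_phi U y))
    fun n => ?_
  simpa [lp.infty_coeFn_mul] using norm_mul_le (x n) (y n)

lemma phi_smul (c : ℂ) (x : lp A ∞) : phi U (c • x) = ‖c‖ * phi U x := by
  refine phi_eq_of_tendsto U ?_
  have := (tendsto_phi U x).const_mul ‖c‖
  refine this.congr fun n => ?_
  simp [lp.coeFn_smul, norm_smul]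

lemma phi_star (x : lp A ∞) : phi U (star x) = phi U x := by
  refine phi_eq_of_tendsto U ?_
  refine (tendsto_phi U x).congr fun n => ?_
  simp [lp.coeFn_star]

lemma phi_star_mul_self (x : lp A ∞) : phi U (star x * x) = phi U x * phi U x := by
  refine phi_eq_of_tendsto U ?_
  have := (tendsto_phi U x).mul (tendsto_phi U x)
  refine this.congr fun n => ?_
  simp [lp.infty_coeFn_mul, lp.coeFn_star, CStarRing.norm_star_mul_self]

lemma phi_one : phi U (1 : lp A ∞) = 1 :=
  phi_eq_of_tendsto U (by simp [lp.infty_coeFn_one])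

lemma phi_eq_zero_of_eventually {x : lp A ∞} (h : ∀ᶠ n in U, x n = 0) : phi U x = 0 := by
  refine phi_eq_of_tendsto U ?_
  refine Tendsto.congr' ?_ (tendsto_const_nhds : Tendsto (fun _ : ℕ => (0:ℝ)) U _)
  filter_upwards [h] with n hn
  simp [hn]

/-- truncation of an `lp` element to a subset -/
def trunc (x : lp A ∞) (T : Set ℕ) : lp A ∞ :=
  ⟨fun n => if n ∈ T then x n else 0, by
    apply memℓp_infty
    refine ⟨‖x‖, ?_⟩
    rintro r ⟨n, rfl⟩
    dsimp only
    split_ifs with h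
    · exact lp.norm_apply_le_norm ENNReal.top_ne_zero x n
    · simp only [norm_zero]; exact norm_nonneg x⟩

lemma trunc_apply (x : lp A ∞) (T : Set ℕ) (n : ℕ) :
    (trunc x T) n = if n ∈ T then x n else 0 := rfl

lemma phi_sub_trunc (x : lp A ∞) {T : Set ℕ} (hT : T ∈ U) : phi U (x - trunc x T) = 0 := by
  apply phi_eq_zero_of_eventually
  filter_upwards [hT] with n hn
  simp [lp.coeFn_sub, trunc_apply, hn]

lemma norm_trunc_le (x : lp A ∞) {T : Set ℕ} {c : ℝ} (hc : 0 ≤ c)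
    (h : ∀ n ∈ T, ‖x n‖ ≤ c) : ‖trunc x T‖ ≤ c := by
  apply lp.norm_le_of_forall_le hc
  intro n
  by_cases hn : n ∈ T <;> simp [trunc_apply, hn, h n, hc]


variable (A)

/-- Type synonym for `lp A ∞` carrying the ultrafilter seminorm. -/
def UP (_U : Ultrafilter ℕ) : Type _ := lp A ∞

variable {A}

instance : Ring (UP A U) := inferInstanceAs (Ring (lp A ∞))
instance : StarRing (UP A U) := inferInstanceAs (StarRing (lp A ∞))
instance : Algebra ℂ (UP A U) := inferInstanceAs (Algebra ℂ (lp A ∞))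

/-- identity map to the synonym -/
def ofLp : lp A ∞ → UP A U := id
/-- identity map from the synonym -/
def toLp : UP A U → lp A ∞ := id

@[simp] lemma toLp_ofLp (x : lp A ∞) : toLp U (ofLp U x) = x := rfl
@[simp] lemma ofLp_toLp (x : UP A U) : ofLp U (toLp U x) = x := rfl
@[simp] lemma toLp_add (x y : UP A U) : toLp U (x + y) = toLp U x + toLp U y := rfl
@[simp] lemma toLp_sub (x y : UP A U) : toLp U (x - y) = toLp U x - toLp U y := rfl
@[simp] lemma toLp_neg (x : UP A U) : toLp U (-x) = -toLp U x := rfl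
@[simp] lemma toLp_zero : toLp U (0 : UP A U) = 0 := rfl
@[simp] lemma toLp_one : toLp U (1 : UP A U) = 1 := rfl
@[simp] lemma toLp_mul (x y : UP A U) : toLp U (x * y) = toLp U x * toLp U y := rfl
@[simp] lemma toLp_star (x : UP A U) : toLp U (star x) = star (toLp U x) := rfl
@[simp] lemma toLp_smul (c : ℂ) (x : UP A U) : toLp U (c • x) = c • toLp U x := rfl
@[simp] lemma toLp_algebraMap (c : ℂ) :
    toLp U (algebraMap ℂ (UP A U) c) = algebraMap ℂ (lp A ∞) c := rfl

instance : SeminormedAddCommGroup (UP A U) :=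
  AddGroupSeminorm.toSeminormedAddCommGroup
    { toFun := fun x => phi U (toLp U x)
      map_zero' := phi_zero U
      neg' := fun x => phi_neg U _
      add_le' := fun x y => phi_add_le U _ _ }

lemma norm_def (x : UP A U) : ‖x‖ = phi U (toLp U x) := rfl

instance : SeminormedRing (UP A U) :=
  { (inferInstance : SeminormedAddCommGroup (UP A U)),
    (inferInstance : Ring (UP A U)) with
    norm_mul_le := fun x y => phi_mul_le U _ _ }

instance : NormedAlgebra ℂ (UP A U) :=
  { (inferInstance : Algebra ℂ (UP A U)) with
    norm_smul_le := fun c x => (phi_smul U c (toLp U x)).le }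

lemma norm_star_mul_self_up (x : UP A U) : ‖star x * x‖ = ‖x‖ * ‖x‖ := by
  rw [norm_def, norm_def]
  exact phi_star_mul_self U (toLp U x)

instance : StarModule ℂ (UP A U) := inferInstanceAs (StarModule ℂ (lp A ∞))

lemma phi_sum_zero {k : ℕ} {f : ℕ → lp A ∞} (hf : ∀ i, phi U (f i) = 0) :
    phi U (∑ i ∈ Finset.range k, f i) = 0 := by
  induction k with
  | zero => simpa using phi_zero U
  | succ k ih =>
      rw [Finset.sum_range_succ]
      refine le_antisymm ?_ (phi_nonneg U _)
      calc phi U (∑ i ∈ Finset.range k, f i + f k)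
          ≤ phi U (∑ i ∈ Finset.range k, f i) + phi U (f k) := phi_add_le U _ _
        _ = 0 := by rw [ih, hf k]; ring

instance : CompleteSpace (UP A U) := by
  refine Metric.complete_of_convergent_controlled_sequences (fun n => (1/2 : ℝ) ^ n)
    (fun n => by positivity) (fun u hu => ?_)
  set d : ℕ → lp A ∞ := fun n => toLp U (u (n+1)) - toLp U (u n) with hd
  have hphid : ∀ n, phi U (d n) < (1/2 : ℝ) ^ n := by
    intro n
    have := hu n (n+1) n (Nat.le_succ n) le_rfl
    rwa [dist_eq_norm] at this
  -- truncation sets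
  have hTmem : ∀ n, {i | ‖d n i‖ ≤ (1/2 : ℝ) ^ n} ∈ U := by
    intro n
    have := (tendsto_phi U (d n)).eventually_lt_const (hphid n)
    exact Filter.mem_of_superset this fun i hi => le_of_lt (show ‖(d n) i‖ < _ from hi)
  set t : ℕ → lp A ∞ := fun n => trunc (d n) {i | ‖d n i‖ ≤ (1/2 : ℝ) ^ n} with ht
  have hnt : ∀ n, ‖t n‖ ≤ (1/2 : ℝ) ^ n := fun n =>
    norm_trunc_le (d n) (by positivity) fun i hi => hi
  have hphit : ∀ n, phi U (d n - t n) = 0 := fun n => phi_sub_trunc U (d n) (hTmem n)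
  set w : ℕ → lp A ∞ := fun n => toLp U (u 0) + ∑ k ∈ Finset.range n, t k with hw
  have hcauchy : CauchySeq w := by
    refine cauchySeq_of_le_geometric (1/2 : ℝ) 1 (by norm_num) fun n => ?_
    rw [dist_eq_norm, hw]
    simp only [Finset.sum_range_succ]
    rw [show toLp U (u 0) + ∑ k ∈ Finset.range n, t k -
        (toLp U (u 0) + (∑ k ∈ Finset.range n, t k + t n)) = -(t n) by abel]
    rw [norm_neg]
    simpa using hnt n
  obtain ⟨x, hx⟩ := cauchySeq_tendsto_of_complete hcauchy
  refine ⟨ofLp U x, ?_⟩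
  have hdist : ∀ n, dist (u n) (ofLp U x) ≤ ‖w n - x‖ := by
    intro n
    rw [dist_eq_norm, norm_def]
    have htele : ∑ k ∈ Finset.range n, d k = toLp U (u n) - toLp U (u 0) := by
      rw [hd]; exact Finset.sum_range_sub (fun k => toLp U (u k)) n
    have hsplit : toLp U (u n - ofLp U x) =
        (∑ k ∈ Finset.range n, (d k - t k)) + (w n - x) := by
      show toLp U (u n) - x = _
      rw [Finset.sum_sub_distrib, htele]
      show _ = _ + (toLp U (u 0) + ∑ k ∈ Finset.range n, t k - x)
      abel
    rw [hsplit]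
    calc phi U ((∑ k ∈ Finset.range n, (d k - t k)) + (w n - x))
        ≤ phi U (∑ k ∈ Finset.range n, (d k - t k)) + phi U (w n - x) := phi_add_le U _ _
      _ = phi U (w n - x) := by rw [phi_sum_zero U hphit]; ring
      _ ≤ ‖w n - x‖ := phi_le_norm U _
  have h0 : Filter.Tendsto (fun n => ‖w n - x‖) Filter.atTop (𝓝 0) := by
    have := hx.sub_const x
    simpa using this.norm
  exact tendsto_iff_dist_tendsto_zero.2
    (squeeze_zero (fun n => dist_nonneg) hdist h0)

variable (A) in
/-- The ultraproduct C⋆-algebra. -/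
def Quot (U : Ultrafilter ℕ) : Type _ := SeparationQuotient (UP A U)

instance : NormedRing (Quot A U) := inferInstanceAs (NormedRing (SeparationQuotient (UP A U)))
instance : NormedAlgebra ℂ (Quot A U) :=
  inferInstanceAs (NormedAlgebra ℂ (SeparationQuotient (UP A U)))
instance : CompleteSpace (Quot A U) :=
  inferInstanceAs (CompleteSpace (SeparationQuotient (UP A U)))

/-- quotient map -/
def mkQ (x : UP A U) : Quot A U := SeparationQuotient.mk x

lemma mkQ_surjective : Function.Surjective (mkQ U (A := A)) :=
  SeparationQuotient.surjective_mk

@[simp] lemma mkQ_add (x y : UP A U) : mkQ U (x + y) = mkQ U x + mkQ U y := rfl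
@[simp] lemma mkQ_mul (x y : UP A U) : mkQ U (x * y) = mkQ U x * mkQ U y := rfl
@[simp] lemma mkQ_one : mkQ U (1 : UP A U) = 1 := rfl
@[simp] lemma mkQ_zero : mkQ U (0 : UP A U) = 0 := rfl
@[simp] lemma mkQ_sub (x y : UP A U) : mkQ U (x - y) = mkQ U x - mkQ U y := rfl
@[simp] lemma mkQ_smul (c : ℂ) (x : UP A U) : mkQ U (c • x) = c • mkQ U x := rfl
@[simp] lemma mkQ_pow (x : UP A U) (k : ℕ) : mkQ U (x ^ k) = mkQ U x ^ k := by
  induction k with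
  | zero => simp [pow_zero]
  | succ k ih => rw [pow_succ, pow_succ, ← ih]; rfl

@[simp] lemma norm_mkQ (x : UP A U) : ‖mkQ U x‖ = ‖x‖ := rfl

lemma star_aux : ∀ x y : UP A U, Inseparable x y →
    SeparationQuotient.mk (star x) = SeparationQuotient.mk (star y) := by
  intro x y h
  rw [SeparationQuotient.mk_eq_mk]
  rw [Metric.inseparable_iff, dist_eq_norm] at h ⊢
  rw [← star_sub]
  calc ‖star (x - y)‖ = ‖x - y‖ := by
        rw [norm_def, norm_def, toLp_star]; exact phi_star U _
    _ = 0 := h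

instance : Star (Quot A U) where
  star := SeparationQuotient.lift (fun x => SeparationQuotient.mk (star x)) (star_aux U)

@[simp] lemma mkQ_star (x : UP A U) : mkQ U (star x) = star (mkQ U x) := rfl

instance : StarRing (Quot A U) where
  star_involutive := by
    rintro ⟨x⟩
    show mkQ U (star (star x)) = mkQ U x
    rw [star_star]
  star_mul := by
    rintro ⟨x⟩ ⟨y⟩
    show mkQ U (star (x * y)) = mkQ U (star y) * mkQ U (star x)
    rw [star_mul]; rfl
  star_add := by
    rintro ⟨x⟩ ⟨y⟩
    show mkQ U (star (x + y)) = mkQ U (star x) + mkQ U (star y)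
    rw [star_add]; rfl

instance : StarModule ℂ (Quot A U) where
  star_smul := by
    rintro c ⟨x⟩
    show mkQ U (star (c • x)) = star c • mkQ U (star x)
    rw [star_smul]; rfl

instance : CStarRing (Quot A U) where
  norm_mul_self_le := by
    rintro ⟨x⟩
    show ‖x‖ * ‖x‖ ≤ ‖mkQ U (star x * x)‖
    rw [norm_mkQ, norm_star_mul_self_up]

instance : CStarAlgebra (Quot A U) where

/-- quotient map as star algebra hom -/
def mkQHom : UP A U →⋆ₐ[ℂ] Quot A U where
  toFun := mkQ U
  map_one' := rfl
  map_mul' _ _ := rfl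
  map_zero' := rfl
  map_add' _ _ := rfl
  commutes' _ := rfl
  map_star' _ := rfl

/-- coordinate evaluation as star algebra hom -/
def coordHom (n : ℕ) : lp A ∞ →⋆ₐ[ℂ] A n where
  toFun x := x n
  map_one' := congr_fun lp.infty_coeFn_one n
  map_mul' x y := congr_fun (lp.infty_coeFn_mul x y) n
  map_zero' := congr_fun (lp.coeFn_zero A ∞) n
  map_add' x y := congr_fun (lp.coeFn_add x y) n
  commutes' c := by
    show (algebraMap ℂ (lp A ∞) c) n = algebraMap ℂ (A n) c
    rw [Algebra.algebraMap_eq_smul_one c, Algebra.algebraMap_eq_smul_one c]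
    rw [congr_fun (lp.coeFn_smul c (1 : lp A ∞)) n, Pi.smul_apply,
      congr_fun lp.infty_coeFn_one n]
    rfl
  map_star' x := congr_fun (lp.coeFn_star x) n

end UltraProd

lemma map_polyEvalA {R S : Type*} [Ring R] [StarRing R] [Algebra ℂ R]
    [Ring S] [StarRing S] [Algebra ℂ S] (f : R →⋆ₐ[ℂ] S) (p : (ℕ × ℕ) →₀ ℂ) (a : R) :
    f (polyEvalA p a) = polyEvalA p (f a) := by
  unfold polyEvalA
  rw [map_finsuppSum]
  refine Finsupp.sum_congr fun kl _ => ?_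
  rw [map_smul, map_mul, map_pow, map_pow, map_star]

lemma conj_continuous : Continuous fun z : ℂ => (starRingEnd ℂ) z := continuous_star

lemma monomial_continuous (c : ℂ) (k l : ℕ) :
    Continuous fun z : ℂ => c * z ^ k * (starRingEnd ℂ) z ^ l :=
  (continuous_const.mul (continuous_pow k)).mul (conj_continuous.pow l)

lemma polyEvalC_continuous (p : (ℕ × ℕ) →₀ ℂ) : Continuous (polyEvalC p) := by
  unfold polyEvalC
  simp only [Finsupp.sum]
  exact continuous_finset_sum _ fun i _ => monomial_continuous (p i) i.1 i.2

lemma polyEvalA_eq_cfc {B : Type*} [CStarAlgebra B] (p : (ℕ × ℕ) →₀ ℂ) (b : B)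
    (hb : IsStarNormal b) :
    polyEvalA p b = cfc (polyEvalC p) b := by
  unfold polyEvalA polyEvalC
  simp only [Finsupp.sum]
  have hfs : (fun z : ℂ => ∑ x ∈ p.support, p x * z ^ x.1 * (starRingEnd ℂ) z ^ x.2) =
      ∑ x ∈ p.support, fun z : ℂ => p x * z ^ x.1 * (starRingEnd ℂ) z ^ x.2 := by
    funext z; simp [Finset.sum_apply]
  rw [hfs, cfc_sum (fun kl (z : ℂ) => p kl * z ^ kl.1 * (starRingEnd ℂ) z ^ kl.2) b p.support
    (fun i _ => (monomial_continuous (p i) i.1 i.2).continuousOn)]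
  refine Finset.sum_congr rfl fun kl _ => ?_
  have h1 : b ^ kl.1 = cfc (fun z : ℂ => z ^ kl.1) b := (cfc_pow_id b kl.1).symm
  have h2 : star b ^ kl.2 = cfc (fun z : ℂ => (starRingEnd ℂ z) ^ kl.2) b := by
    have : star b = cfc (fun z : ℂ => star z) b := (cfc_star_id (a := b)).symm
    rw [this, ← cfc_pow (fun z : ℂ => star z) kl.2 b]
    rfl
  rw [h1, h2,
    ← cfc_mul (fun z : ℂ => z ^ kl.1) (fun z : ℂ => (starRingEnd ℂ) z ^ kl.2) b (continuous_pow kl.1).continuousOn ((conj_continuous.pow kl.2)).continuousOn,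
    ← cfc_smul (p kl) (fun z : ℂ => z ^ kl.1 * (starRingEnd ℂ) z ^ kl.2) b (((continuous_pow kl.1).mul (conj_continuous.pow kl.2))).continuousOn]
  refine cfc_congr fun z _ => ?_
  simp only [smul_eq_mul]
  ring

section KeyLemmas

variable {B : Type*} [CStarAlgebra B] [Nontrivial B]

lemma spectrum_subset_S (b : B) (hb1 : ‖b‖ ≤ 1) {m : ℕ} (lam : Fin m → ℂ) (R : Fin m → ℝ)
    (hR : ∀ j, 0 < R j)
    (hinv : ∀ j, IsUnit (b - algebraMap ℂ B (lam j)))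
    (hinvn : ∀ j, ‖Ring.inverse (b - algebraMap ℂ B (lam j))‖ ≤ (R j)⁻¹) :
    spectrum ℂ b ⊆ {z : ℂ | ‖z‖ ≤ 1 ∧ ∀ j, R j ≤ ‖z - lam j‖} := by
  intro z hz
  refine ⟨le_trans (spectrum.norm_le_norm_of_mem hz) hb1, fun j => ?_⟩
  by_contra hlt
  push_neg at hlt
  -- show b - z is a unit, contradicting z ∈ spectrum
  set u := b - algebraMap ℂ B (lam j) with hu
  set w := Ring.inverse u * algebraMap ℂ B (z - lam j) with hw
  have hwn : ‖w‖ < 1 := by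
    calc ‖w‖ ≤ ‖Ring.inverse u‖ * ‖algebraMap ℂ B (z - lam j)‖ := norm_mul_le _ _
      _ ≤ (R j)⁻¹ * ‖z - lam j‖ := by
          refine mul_le_mul (hinvn j) ?_ (norm_nonneg _) (inv_nonneg.mpr (hR j).le)
          rw [norm_algebraMap']
      _ < (R j)⁻¹ * R j := by
          exact mul_lt_mul_of_pos_left hlt (inv_pos.mpr (hR j))
      _ = 1 := inv_mul_cancel₀ (hR j).ne'
  have hunit : IsUnit (b - algebraMap ℂ B z) := by
    have heq : b - algebraMap ℂ B z = u * (1 - w) := by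
      rw [mul_sub, mul_one, hw, ← mul_assoc, Ring.mul_inverse_cancel u (hinv j), one_mul,
        hu, map_sub]
      abel
    rw [heq]
    exact (hinv j).mul (Units.isUnit (Units.oneSub w hwn))
  rw [spectrum.mem_iff] at hz
  exact hz (by simpa using hunit.neg)

lemma isCompact_S {m : ℕ} (lam : Fin m → ℂ) (R : Fin m → ℝ) :
    IsCompact {z : ℂ | ‖z‖ ≤ 1 ∧ ∀ j, R j ≤ ‖z - lam j‖} := by
  have hclosed : IsClosed {z : ℂ | ‖z‖ ≤ 1 ∧ ∀ j, R j ≤ ‖z - lam j‖} := by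
    have hset : {z : ℂ | ‖z‖ ≤ 1 ∧ ∀ j, R j ≤ ‖z - lam j‖} =
        {z : ℂ | ‖z‖ ≤ 1} ∩ ⋂ j, {z : ℂ | R j ≤ ‖z - lam j‖} := by
      ext z; simp [Set.mem_iInter]
    rw [hset]
    exact (isClosed_le continuous_norm continuous_const).inter
      (isClosed_iInter fun j =>
        isClosed_le continuous_const ((continuous_id.sub continuous_const).norm))
  refine Metric.isCompact_of_isClosed_isBounded hclosed ?_
  refine Bornology.IsBounded.subset (Metric.isBounded_closedBall (x := (0:ℂ)) (r := 1)) ?_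
  intro z hz
  simpa [Metric.mem_closedBall, dist_zero_right] using hz.1

lemma abs_sq_sub_one_continuousOn (p : (ℕ × ℕ) →₀ ℂ) (s : Set ℂ) :
    ContinuousOn (fun z => |‖polyEvalC p z‖ ^ 2 - 1|) s :=
  (((polyEvalC_continuous p).norm.pow 2).sub continuous_const).abs.continuousOn

/-- Key estimate for normal elements with spectrum in `S`. -/
lemma norm_le_sSup_of_normal (p : (ℕ × ℕ) →₀ ℂ) (b : B) (hb : IsStarNormal b)
    {S : Set ℂ} (hScpt : IsCompact S) (hSne : S.Nonempty) (hspec : spectrum ℂ b ⊆ S) :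
    ‖polyEvalA p b * star (polyEvalA p b) - 1‖ ≤
        sSup ((fun z => |‖polyEvalC p z‖ ^ 2 - 1|) '' S) ∧
    ‖star (polyEvalA p b) * polyEvalA p b - 1‖ ≤
        sSup ((fun z => |‖polyEvalC p z‖ ^ 2 - 1|) '' S) := by
  have hbdd : BddAbove ((fun z => |‖polyEvalC p z‖ ^ 2 - 1|) '' S) :=
    hScpt.bddAbove_image (abs_sq_sub_one_continuousOn p S)
  set M := sSup ((fun z => |‖polyEvalC p z‖ ^ 2 - 1|) '' S) with hM
  have hM0 : 0 ≤ M := by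
    obtain ⟨z0, hz0⟩ := hSne
    exact le_trans (abs_nonneg _) (le_csSup hbdd ⟨z0, hz0, rfl⟩)
  set f := polyEvalC p with hf
  have hfc : Continuous f := polyEvalC_continuous p
  have hx : polyEvalA p b = cfc f b := polyEvalA_eq_cfc p b hb
  have hstar : star (polyEvalA p b) = cfc (fun z => star (f z)) b := by
    rw [hx, cfc_star]
  have hmul1 : polyEvalA p b * star (polyEvalA p b) =
      cfc (fun z => f z * star (f z)) b := by
    rw [hstar, hx, cfc_mul _ _ b hfc.continuousOn hfc.star.continuousOn]
  have hmul2 : star (polyEvalA p b) * polyEvalA p b =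
      cfc (fun z => f z * star (f z)) b := by
    rw [hstar, hx, ← cfc_mul _ _ b hfc.star.continuousOn hfc.continuousOn]
    exact cfc_congr fun z _ => mul_comm _ _
  have hsub : ∀ g : ℂ → ℂ, ContinuousOn g (spectrum ℂ b) →
      cfc g b - 1 = cfc (fun z => g z - 1) b := by
    intro g hg
    rw [cfc_sub g (fun _ => (1:ℂ)) b hg continuousOn_const, cfc_const 1 b]
    simp [Algebra.algebraMap_eq_smul_one]
  have hptwise : ∀ z ∈ spectrum ℂ b, ‖f z * star (f z) - 1‖ ≤ M := by
    intro z hz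
    have : f z * star (f z) - 1 = (((‖f z‖ ^ 2 - 1 : ℝ)) : ℂ) := by
      rw [show star (f z) = (starRingEnd ℂ) (f z) from rfl, Complex.mul_conj,
        Complex.normSq_eq_norm_sq]
      push_cast
      ring
    rw [this, Complex.norm_real]
    exact le_csSup hbdd ⟨z, hspec hz, rfl⟩
  constructor
  · rw [hmul1, hsub (fun z => f z * star (f z)) (hfc.mul hfc.star).continuousOn]
    exact norm_cfc_le hM0 hptwise
  · rw [hmul2, hsub (fun z => f z * star (f z)) (hfc.mul hfc.star).continuousOn]
    exact norm_cfc_le hM0 hptwise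

end KeyLemmas

namespace UltraProd

variable {A : ℕ → Type u} [∀ n, CStarAlgebra (A n)] [∀ n, Nontrivial (A n)]
variable (U : Ultrafilter ℕ)

instance : NormOneClass (Quot A U) where
  norm_one := by
    show phi U (toLp U (1 : UP A U)) = 1
    rw [toLp_one]
    exact phi_one U

instance : Nontrivial (Quot A U) := by
  refine nontrivial_of_ne 1 0 fun h => ?_
  have h1 : ‖(1 : Quot A U)‖ = 1 := norm_one
  rw [h, norm_zero] at h1
  exact one_ne_zero h1.symm

end UltraProd

universe v

/-- A counterexample package. -/
structure Cex : Type (v+1) where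
  B : Type v
  inst : CStarAlgebra B
  nt : Nontrivial B
  a : B

/-- The counterexample property. -/
def CexProp {m : ℕ} (lam : Fin m → ℂ) (R : Fin m → ℝ) (p : (ℕ × ℕ) →₀ ℂ)
    (εM : ℝ) (d : ℝ) (X : Cex.{v}) : Prop :=
  letI := X.inst
  ‖X.a‖ ≤ 1 ∧ ‖X.a * star X.a - star X.a * X.a‖ ≤ d ∧
  (∀ j, IsUnit (X.a - algebraMap ℂ X.B (lam j))) ∧
  (∀ j, ‖Ring.inverse (X.a - algebraMap ℂ X.B (lam j))‖ ≤ (R j)⁻¹) ∧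
  (εM < ‖polyEvalA p X.a * star (polyEvalA p X.a) - 1‖ ∨
   εM < ‖star (polyEvalA p X.a) * polyEvalA p X.a - 1‖)

open UltraProd in
lemma soft (m : ℕ) (lam : Fin m → ℂ) (R : Fin m → ℝ) (hR : ∀ j, 0 < R j)
    (S : Set ℂ) (hS : S = {z : ℂ | ‖z‖ ≤ 1 ∧ ∀ j, R j ≤ ‖z - lam j‖})
    (hSne : S.Nonempty)
    (p : (ℕ × ℕ) →₀ ℂ) (ε : ℝ) (hε : 0 < ε) :
    ∃ δ₀ : ℝ, 0 < δ₀ ∧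
      ∀ (A : Type v) [CStarAlgebra A],
        ∀ a : A, ‖a‖ ≤ 1 → ‖a * star a - star a * a‖ ≤ δ₀ →
          (∀ j, IsUnit (a - algebraMap ℂ A (lam j))) →
          (∀ j, ‖Ring.inverse (a - algebraMap ℂ A (lam j))‖ ≤ (R j)⁻¹) →
          ‖polyEvalA p a * star (polyEvalA p a) - 1‖ ≤
              sSup ((fun z => |‖polyEvalC p z‖ ^ 2 - 1|) '' S) + ε ∧
          ‖star (polyEvalA p a) * polyEvalA p a - 1‖ ≤
              sSup ((fun z => |‖polyEvalC p z‖ ^ 2 - 1|) '' S) + ε := by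
  set M := sSup ((fun z => |‖polyEvalC p z‖ ^ 2 - 1|) '' S) with hM
  by_contra hcon
  push_neg at hcon
  have H : ∀ n : ℕ, ∃ X : Cex.{v}, CexProp lam R p (M + ε) (1 / (n + 1)) X := by
    intro n
    obtain ⟨A, inst, a, h1, h2, h3, h4, h5⟩ := hcon (1 / (n + 1)) (by positivity)
    refine ⟨⟨A, inst, ?_, a⟩, ?_⟩
    · -- nontriviality
      rcases le_or_gt ‖polyEvalA p a * star (polyEvalA p a) - 1‖ (M + ε) with hc | hc
      · have h6 := h5 hc
        have : star (polyEvalA p a) * polyEvalA p a - 1 ≠ 0 := by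
          intro h0
          rw [h0, norm_zero] at h6
          have hM0 : 0 ≤ M := by
            obtain ⟨z0, hz0⟩ := hSne
            have hbdd : BddAbove ((fun z => |‖polyEvalC p z‖ ^ 2 - 1|) '' S) := by
              rw [hS]
              exact (isCompact_S lam R).bddAbove_image
                (abs_sq_sub_one_continuousOn p _)
            exact le_trans (abs_nonneg _) (le_csSup hbdd ⟨z0, hz0, rfl⟩)
          linarith
        exact nontrivial_of_ne _ _ this
      · have : polyEvalA p a * star (polyEvalA p a) - 1 ≠ 0 := by
          intro h0
          rw [h0, norm_zero] at hc
          have hM0 : 0 ≤ M := by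
            obtain ⟨z0, hz0⟩ := hSne
            have hbdd : BddAbove ((fun z => |‖polyEvalC p z‖ ^ 2 - 1|) '' S) := by
              rw [hS]
              exact (isCompact_S lam R).bddAbove_image
                (abs_sq_sub_one_continuousOn p _)
            exact le_trans (abs_nonneg _) (le_csSup hbdd ⟨z0, hz0, rfl⟩)
          linarith
        exact nontrivial_of_ne _ _ this
    · constructor
      · exact h1
      refine ⟨h2, h3, h4, ?_⟩
      rcases le_or_gt ‖polyEvalA p a * star (polyEvalA p a) - 1‖ (M + ε) with hc | hc
      · exact Or.inr (h5 hc)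
      · exact Or.inl hc
  choose F hF using H
  -- set up the ultraproduct
  set A : ℕ → Type v := fun n => (F n).B with hA
  letI instA : ∀ n, CStarAlgebra (A n) := fun n => (F n).inst
  letI instN : ∀ n, Nontrivial (A n) := fun n => (F n).nt
  set a : ∀ n, A n := fun n => (F n).a with ha
  have hF' : ∀ n, ‖a n‖ ≤ 1 ∧ ‖a n * star (a n) - star (a n) * a n‖ ≤ 1 / (n + 1) ∧
      (∀ j, IsUnit (a n - algebraMap ℂ (A n) (lam j))) ∧
      (∀ j, ‖Ring.inverse (a n - algebraMap ℂ (A n) (lam j))‖ ≤ (R j)⁻¹) ∧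
      ((M + ε) < ‖polyEvalA p (a n) * star (polyEvalA p (a n)) - 1‖ ∨
       (M + ε) < ‖star (polyEvalA p (a n)) * polyEvalA p (a n) - 1‖) := fun n => hF n
  set U : Ultrafilter ℕ := Filter.hyperfilter ℕ with hU
  have hUatTop : (U : Filter ℕ) ≤ Filter.atTop := by
    rw [← Nat.cofinite_eq_atTop]
    exact Filter.hyperfilter_le_cofinite
  -- the element
  set abar : lp A ∞ := ⟨fun n => a n, memℓp_infty ⟨1, by
    rintro r ⟨n, rfl⟩; exact (hF' n).1⟩⟩ with habar
  set ahat : Quot A U := mkQ U (ofLp U abar) with hahat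
  have habar_coe : ∀ n, abar n = a n := fun n => rfl
  -- norm bound
  have hnorm1 : ‖ahat‖ ≤ 1 := by
    refine le_trans (phi_le_norm U abar) ?_
    exact lp.norm_le_of_forall_le zero_le_one fun n => (hF' n).1
  -- coordinates of products etc.
  have hcoord_mul : ∀ (x y : lp A ∞) (n : ℕ), (x * y) n = x n * y n :=
    fun x y n => congr_fun (lp.infty_coeFn_mul x y) n
  have hcoord_sub : ∀ (x y : lp A ∞) (n : ℕ), (x - y) n = x n - y n :=
    fun x y n => congr_fun (lp.coeFn_sub x y) n
  have hcoord_star : ∀ (x : lp A ∞) (n : ℕ), (star x) n = star (x n) :=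
    fun x n => congr_fun (lp.coeFn_star x) n
  -- normality
  have hphi0 : phi U (star abar * abar - abar * star abar) = 0 := by
    apply phi_eq_of_tendsto
    have hb : ∀ n, ‖(star abar * abar - abar * star abar) n‖ ≤ 1 / (n + 1 : ℝ) := by
      intro n
      rw [hcoord_sub, hcoord_mul, hcoord_mul, hcoord_star]
      rw [norm_sub_rev]
      exact_mod_cast (hF' n).2.1
    have h0 : Filter.Tendsto (fun n : ℕ => ‖(star abar * abar - abar * star abar) n‖)
        Filter.atTop (𝓝 0) := by
      refine squeeze_zero (fun n => norm_nonneg _) hb ?_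
      exact tendsto_one_div_add_atTop_nhds_zero_nat
    exact h0.mono_left hUatTop
  have hnormal : IsStarNormal ahat := by
    constructor
    show star ahat * ahat = ahat * star ahat
    rw [← sub_eq_zero]
    have heq : star ahat * ahat - ahat * star ahat =
        mkQ U (ofLp U (star abar * abar - abar * star abar)) := rfl
    rw [heq, ← norm_eq_zero, norm_mkQ, norm_def]
    exact hphi0
  -- inverses
  have hinv : ∀ j, IsUnit (ahat - algebraMap ℂ (Quot A U) (lam j)) ∧
      ‖Ring.inverse (ahat - algebraMap ℂ (Quot A U) (lam j))‖ ≤ (R j)⁻¹ := by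
    intro j
    set bj : lp A ∞ := ⟨fun n => Ring.inverse (a n - algebraMap ℂ (A n) (lam j)),
      memℓp_infty ⟨(R j)⁻¹, by rintro r ⟨n, rfl⟩; exact (hF' n).2.2.2.1 j⟩⟩ with hbj
    have hbj_coe : ∀ n, bj n = Ring.inverse (a n - algebraMap ℂ (A n) (lam j)) := fun n => rfl
    have hcoord_alg : ∀ (c : ℂ) (n : ℕ),
        (algebraMap ℂ (lp A ∞) c) n = algebraMap ℂ (A n) c :=
      fun c n => (coordHom (A := A) n).commutes c
    have hprod1 : (abar - algebraMap ℂ (lp A ∞) (lam j)) * bj = 1 := by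
      refine Subtype.ext (funext fun n => ?_)
      show ((abar - algebraMap ℂ (lp A ∞) (lam j)) * bj) n = (1 : lp A ∞) n
      rw [hcoord_mul, hcoord_sub, hcoord_alg, hbj_coe, habar_coe,
        congr_fun lp.infty_coeFn_one n]
      exact Ring.mul_inverse_cancel _ ((hF' n).2.2.1 j)
    have hprod2 : bj * (abar - algebraMap ℂ (lp A ∞) (lam j)) = 1 := by
      refine Subtype.ext (funext fun n => ?_)
      show (bj * (abar - algebraMap ℂ (lp A ∞) (lam j))) n = (1 : lp A ∞) n
      rw [hcoord_mul, hcoord_sub, hcoord_alg, hbj_coe, habar_coe,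
        congr_fun lp.infty_coeFn_one n]
      exact Ring.inverse_mul_cancel _ ((hF' n).2.2.1 j)
    have hsubeq : ahat - algebraMap ℂ (Quot A U) (lam j) =
        mkQ U (ofLp U (abar - algebraMap ℂ (lp A ∞) (lam j))) := rfl
    set uj : (Quot A U)ˣ :=
      { val := ahat - algebraMap ℂ (Quot A U) (lam j)
        inv := mkQ U (ofLp U bj)
        val_inv := by
          rw [hsubeq, ← mkQ_mul]
          show mkQ U (ofLp U ((abar - algebraMap ℂ (lp A ∞) (lam j)) * bj)) = 1
          rw [hprod1]; rfl
        inv_val := by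
          rw [hsubeq, ← mkQ_mul]
          show mkQ U (ofLp U (bj * (abar - algebraMap ℂ (lp A ∞) (lam j)))) = 1
          rw [hprod2]; rfl } with huj
    refine ⟨⟨uj, rfl⟩, ?_⟩
    have hri : Ring.inverse (ahat - algebraMap ℂ (Quot A U) (lam j)) = mkQ U (ofLp U bj) := by
      rw [show ahat - algebraMap ℂ (Quot A U) (lam j) = (uj : Quot A U) from rfl,
        Ring.inverse_unit]
      rfl
    rw [hri, norm_mkQ, norm_def]
    refine le_trans (phi_le_norm U _) ?_
    exact lp.norm_le_of_forall_le (inv_nonneg.mpr (hR j).le) fun n => (hF' n).2.2.2.1 j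
  -- spectrum
  have hspec : spectrum ℂ ahat ⊆ S := by
    rw [hS]
    exact spectrum_subset_S ahat hnorm1 lam R hR (fun j => (hinv j).1) (fun j => (hinv j).2)
  -- key estimate
  have hScpt : IsCompact S := by rw [hS]; exact isCompact_S lam R
  obtain ⟨hkey1, hkey2⟩ := norm_le_sSup_of_normal p ahat hnormal hScpt hSne hspec
  -- transfer back to coordinates
  set E1 : lp A ∞ := polyEvalA p abar * star (polyEvalA p abar) - 1 with hE1
  set E2 : lp A ∞ := star (polyEvalA p abar) * polyEvalA p abar - 1 with hE2
  have hmkpoly : mkQ U (ofLp U (polyEvalA p abar)) = polyEvalA p ahat :=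
    map_polyEvalA (mkQHom U) p (ofLp U abar)
  have hmkE1 : mkQ U (ofLp U E1) = polyEvalA p ahat * star (polyEvalA p ahat) - 1 := by
    rw [← hmkpoly]; rfl
  have hmkE2 : mkQ U (ofLp U E2) = star (polyEvalA p ahat) * polyEvalA p ahat - 1 := by
    rw [← hmkpoly]; rfl
  have hcoordpoly : ∀ n, (polyEvalA p abar) n = polyEvalA p (a n) :=
    fun n => map_polyEvalA (coordHom (A := A) n) p abar
  have hE1n : ∀ n, E1 n = polyEvalA p (a n) * star (polyEvalA p (a n)) - 1 := by
    intro n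
    rw [hE1, hcoord_sub, hcoord_mul, hcoord_star, hcoordpoly, congr_fun lp.infty_coeFn_one n,
      Pi.one_apply]
  have hE2n : ∀ n, E2 n = star (polyEvalA p (a n)) * polyEvalA p (a n) - 1 := by
    intro n
    rw [hE2, hcoord_sub, hcoord_mul, hcoord_star, hcoordpoly, congr_fun lp.infty_coeFn_one n,
      Pi.one_apply]
  -- the U-large disjunction
  have hums : {n : ℕ | M + ε < ‖E1 n‖} ∪ {n : ℕ | M + ε < ‖E2 n‖} ∈ U := by
    refine Filter.univ_mem' fun n => ?_
    rcases (hF' n).2.2.2.2 with h | h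
    · left; show M + ε < ‖E1 n‖; rw [hE1n n]; exact h
    · right; show M + ε < ‖E2 n‖; rw [hE2n n]; exact h
  rcases Ultrafilter.union_mem_iff.mp hums with hs | hs
  · have hev : ∀ᶠ n in (U : Filter ℕ), M + ε ≤ ‖E1 n‖ :=
      Filter.mem_of_superset hs fun n hn => (show M + ε < ‖E1 n‖ from hn).le
    have hle : M + ε ≤ phi U E1 := ge_of_tendsto (tendsto_phi U E1) hev
    have : phi U E1 ≤ M := by
      have hq : phi U E1 = ‖polyEvalA p ahat * star (polyEvalA p ahat) - 1‖ := by
        rw [← hmkE1, norm_mkQ, norm_def]; rfl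
      rw [hq]; exact hkey1
    linarith
  · have hev : ∀ᶠ n in (U : Filter ℕ), M + ε ≤ ‖E2 n‖ :=
      Filter.mem_of_superset hs fun n hn => (show M + ε < ‖E2 n‖ from hn).le
    have hle : M + ε ≤ phi U E2 := ge_of_tendsto (tendsto_phi U E2) hev
    have : phi U E2 ≤ M := by
      have hq : phi U E2 = ‖star (polyEvalA p ahat) * polyEvalA p ahat - 1‖ := by
        rw [← hmkE2, norm_mkQ, norm_def]; rfl
      rw [hq]; exact hkey2
    linarith

section Final

variable {B : Type*} [CStarAlgebra B]

lemma norm_one_le_cstar : ‖(1 : B)‖ ≤ 1 := by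
  have h := CStarRing.norm_star_mul_self (x := (1 : B))
  rw [star_one, one_mul] at h
  nlinarith [norm_nonneg (1 : B)]

lemma norm_pow_le_one' {b : B} (h : ‖b‖ ≤ 1) (k : ℕ) : ‖b ^ k‖ ≤ 1 := by
  induction k with
  | zero => rw [pow_zero]; exact norm_one_le_cstar
  | succ k ih =>
      rw [pow_succ]
      refine le_trans (norm_mul_le _ _) ?_
      nlinarith [norm_nonneg (b ^ k), norm_nonneg b]

lemma norm_polyEvalA_le (p : (ℕ × ℕ) →₀ ℂ) {b : B} (hb : ‖b‖ ≤ 1) :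
    ‖polyEvalA p b‖ ≤ p.sum fun _ c => ‖c‖ := by
  unfold polyEvalA
  rw [Finsupp.sum, Finsupp.sum]
  refine le_trans (norm_sum_le _ _) (Finset.sum_le_sum fun kl _ => ?_)
  rw [norm_smul]
  have h1 : ‖b ^ kl.1 * star b ^ kl.2‖ ≤ 1 := by
    refine le_trans (norm_mul_le _ _) ?_
    have h2 := norm_pow_le_one' hb kl.1
    have h3 : ‖star b ^ kl.2‖ ≤ 1 := norm_pow_le_one' (by rw [norm_star]; exact hb) kl.2
    nlinarith [norm_nonneg (b ^ kl.1), norm_nonneg (star b ^ kl.2)]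
  nlinarith [norm_nonneg (p kl), norm_nonneg (b ^ kl.1 * star b ^ kl.2)]

end Final


theorem stmt6.{u} (m : ℕ) (lam : Fin m → ℂ) (R : Fin m → ℝ) (hR : ∀ j, 0 < R j)
    (S : Set ℂ) (hS : S = {z : ℂ | ‖z‖ ≤ 1 ∧ ∀ j, R j ≤ ‖z - lam j‖})
    (hSne : S.Nonempty)
    (p : (ℕ × ℕ) →₀ ℂ) (ε : ℝ) (hε : 0 < ε) :
    ∃ C : ℝ, 0 ≤ C ∧
      ∀ (A : Type u) [CStarAlgebra A], ∀ δ : ℝ, 0 ≤ δ →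
        ∀ a : A, ‖a‖ ≤ 1 → ‖a * star a - star a * a‖ ≤ δ →
          (∀ j, IsUnit (a - algebraMap ℂ A (lam j))) →
          (∀ j, ‖Ring.inverse (a - algebraMap ℂ A (lam j))‖ ≤ (R j)⁻¹) →
            ‖polyEvalA p a * star (polyEvalA p a) - 1‖ ≤
                sSup ((fun z => |‖polyEvalC p z‖ ^ 2 - 1|) '' S) + ε + C * δ ∧
            ‖star (polyEvalA p a) * polyEvalA p a - 1‖ ≤
                sSup ((fun z => |‖polyEvalC p z‖ ^ 2 - 1|) '' S) + ε + C * δ := by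
  obtain ⟨δ₀, hδ₀, hsoft⟩ := soft m lam R hR S hS hSne p ε hε
  set M := sSup ((fun z => |‖polyEvalC p z‖ ^ 2 - 1|) '' S) with hM
  have hM0 : 0 ≤ M := by
    obtain ⟨z0, hz0⟩ := hSne
    have hbdd : BddAbove ((fun z => |‖polyEvalC p z‖ ^ 2 - 1|) '' S) := by
      rw [hS]
      exact (isCompact_S lam R).bddAbove_image (abs_sq_sub_one_continuousOn p _)
    exact le_trans (abs_nonneg _) (le_csSup hbdd ⟨z0, hz0, rfl⟩)
  set Np := p.sum fun _ c => ‖c‖ with hNp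
  have hNp0 : 0 ≤ Np := by
    rw [hNp, Finsupp.sum]
    exact Finset.sum_nonneg fun _ _ => norm_nonneg _
  refine ⟨(Np ^ 2 + 1) / δ₀, by positivity, ?_⟩
  intro A instA δ hδ a ha1 hcomm hunits hinvn
  by_cases hcase : δ ≤ δ₀
  · obtain ⟨h1, h2⟩ := hsoft A a ha1 (le_trans hcomm hcase) hunits hinvn
    have hCδ : 0 ≤ (Np ^ 2 + 1) / δ₀ * δ := by positivity
    exact ⟨by linarith, by linarith⟩
  · push_neg at hcase
    have hb1 : ‖polyEvalA p a‖ ≤ Np := norm_polyEvalA_le p ha1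
    have hCδ : Np ^ 2 + 1 ≤ (Np ^ 2 + 1) / δ₀ * δ := by
      rw [div_mul_eq_mul_div, le_div_iff₀ hδ₀]
      nlinarith
    have key : ∀ x y : A, ‖x‖ ≤ Np → ‖y‖ ≤ Np → ‖x * y - 1‖ ≤ Np ^ 2 + 1 := by
      intro x y hx hy
      refine le_trans (norm_sub_le _ _) ?_
      have := norm_mul_le x y
      have h1 : ‖(1 : A)‖ ≤ 1 := norm_one_le_cstar
      nlinarith [norm_nonneg x, norm_nonneg y]
    constructor
    · refine le_trans (key _ _ hb1 (by rw [norm_star]; exact hb1)) ?_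
      linarith
    · refine le_trans (key _ _ (by rw [norm_star]; exact hb1) hb1) ?_
      linarith
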